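/- Let r ≥ 1, let K = ℚ(ζ) be the 5^{r+1}-th cyclotomic field with ζ a primitive 5^{r+1}-th root of unity, and let 𝓞 be its ring of integers. Let d be an integer with d ≡ 2 (mod 5) and d² ≡ −1 (mod 5^{r+1}). Let 𝔔 be a maximal ideal of 𝓞 with 5 ∉ 𝔔, let F = 𝓞/𝔔 be its residue field, and let φ : 𝓞 → F be the quotient map. Then the six points of ℙ²(F) with coordinate triples (φ(ζ)²,φ(ζ),1), (φ(ζ)^{2d'},φ(ζ)^{d'},1), (φ(ζ)^{−2},φ(ζ)^{−1},1), (φ(ζ)^{−2d'},φ(ζ)^{−d'},1), (1,0,0), (0,1,0) — where d' is any representative of d, the inverses existing since φ(ζ) is a root of unity in F — are in general position. -/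

import Mathlib

open NumberField

/-- Six points of the projective plane given by coordinate triples are *in general position* if:
they are pairwise distinct as projective points (no two triples are proportional), no three of
them lie on a line (no nonzero linear form vanishes at three of the triples), and the six do not
all lie on a conic (no nonzero quadratic form vanishes at all six triples). -/
def InGeneralPosition6 {k : Type*} [Field k] (P : Fin 6 → Fin 3 → k) : Prop :=
  (∀ i j : Fin 6, i ≠ j → ¬∃ c : k, c ≠ 0 ∧ P j = c • P i) ∧
  (∀ i j l : Fin 6, i ≠ j → i ≠ l → j ≠ l →
    ¬∃ α β γ : k, (α, β, γ) ≠ (0, 0, 0) ∧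
      ∀ m ∈ ({i, j, l} : Set (Fin 6)), α * P m 0 + β * P m 1 + γ * P m 2 = 0) ∧
  ¬∃ a b c d e f : k, (a, b, c, d, e, f) ≠ (0, 0, 0, 0, 0, 0) ∧
    ∀ m : Fin 6,
      a * P m 0 ^ 2 + b * P m 1 ^ 2 + c * P m 2 ^ 2 +
        d * (P m 0 * P m 1) + e * (P m 0 * P m 2) + f * (P m 1 * P m 2) = 0

/-! ### Auxiliary lemmas -/

lemma RGP.vecTail_const' {α : Type*} {m : ℕ} (x : α) :
    Matrix.vecTail (fun _ : Fin (m + 1) => x) = fun _ : Fin m => x := rfl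

lemma RGP.vecHead_const {α : Type*} {m : ℕ} (x : α) :
    Matrix.vecHead (fun _ : Fin (m + 1) => x) = x := rfl

lemma RGP.cons_val_five {α : Type*} {m : ℕ} (x : α) (u : Fin (m + 5) → α) :
    Matrix.vecCons x u 5 =
      Matrix.vecHead (Matrix.vecTail (Matrix.vecTail (Matrix.vecTail (Matrix.vecTail u)))) := rfl

section Helpers
variable {k : Type*} [Field k]

lemma RGP.quad_zero {α β γ t1 t2 t3 : k}
    (h12 : t1 ≠ t2) (h13 : t1 ≠ t3) (h23 : t2 ≠ t3)
    (e1 : α * t1 ^ 2 + β * t1 + γ = 0)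
    (e2 : α * t2 ^ 2 + β * t2 + γ = 0)
    (e3 : α * t3 ^ 2 + β * t3 + γ = 0) : α = 0 ∧ β = 0 ∧ γ = 0 := by
  have hA : α = 0 := by
    have h : α * ((t1 - t2) * ((t1 - t3) * (t2 - t3))) = 0 := by
      linear_combination (t2 - t3) * e1 - (t1 - t3) * e2 + (t1 - t2) * e3
    exact (mul_eq_zero.mp h).resolve_right (mul_ne_zero (sub_ne_zero.mpr h12)
      (mul_ne_zero (sub_ne_zero.mpr h13) (sub_ne_zero.mpr h23)))
  have hB : β = 0 := by
    have h : β * (t1 - t2) = 0 := by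
      linear_combination e1 - e2 + (t2 ^ 2 - t1 ^ 2) * hA
    exact (mul_eq_zero.mp h).resolve_right (sub_ne_zero.mpr h12)
  exact ⟨hA, hB, by linear_combination e1 - t1 ^ 2 * hA - t1 * hB⟩

lemma RGP.line2a {α β γ ta tb : k} (h : ta ≠ tb) (h0 : α = 0)
    (ea : α * ta ^ 2 + β * ta + γ = 0)
    (eb : α * tb ^ 2 + β * tb + γ = 0) : α = 0 ∧ β = 0 ∧ γ = 0 := by
  have hB : β = 0 := by
    have hh : β * (ta - tb) = 0 := by
      linear_combination ea - eb + (tb ^ 2 - ta ^ 2) * h0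
    exact (mul_eq_zero.mp hh).resolve_right (sub_ne_zero.mpr h)
  exact ⟨h0, hB, by linear_combination ea - ta ^ 2 * h0 - ta * hB⟩

lemma RGP.line2b {α β γ ta tb : k} (h : ta ^ 2 ≠ tb ^ 2) (h0 : β = 0)
    (ea : α * ta ^ 2 + β * ta + γ = 0)
    (eb : α * tb ^ 2 + β * tb + γ = 0) : α = 0 ∧ β = 0 ∧ γ = 0 := by
  have hA : α = 0 := by
    have hh : α * (ta ^ 2 - tb ^ 2) = 0 := by
      linear_combination ea - eb + (tb - ta) * h0
    exact (mul_eq_zero.mp hh).resolve_right (sub_ne_zero.mpr h)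
  exact ⟨hA, h0, by linear_combination ea - ta ^ 2 * hA - ta * h0⟩

lemma RGP.line1 {α β γ t : k} (h0 : α = 0) (h1 : β = 0)
    (e : α * t ^ 2 + β * t + γ = 0) : α = 0 ∧ β = 0 ∧ γ = 0 :=
  ⟨h0, h1, by linear_combination e - t ^ 2 * h0 - t * h1⟩

lemma RGP.cubic_zero {c d e f t1 t2 t3 t4 : k}
    (h12 : t1 ≠ t2) (h13 : t1 ≠ t3) (h14 : t1 ≠ t4)
    (h23 : t2 ≠ t3) (h24 : t2 ≠ t4) (h34 : t3 ≠ t4)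
    (E1 : d * t1 ^ 3 + e * t1 ^ 2 + f * t1 + c = 0)
    (E2 : d * t2 ^ 3 + e * t2 ^ 2 + f * t2 + c = 0)
    (E3 : d * t3 ^ 3 + e * t3 ^ 2 + f * t3 + c = 0)
    (E4 : d * t4 ^ 3 + e * t4 ^ 2 + f * t4 + c = 0) :
    d = 0 ∧ e = 0 ∧ f = 0 ∧ c = 0 := by
  have hD : d = 0 := by
    have h : d * ((t1 - t2) * ((t1 - t3) * ((t1 - t4) *
        ((t2 - t3) * ((t2 - t4) * (t3 - t4)))))) = 0 := by
      linear_combination ((t2 - t3) * (t2 - t4) * (t3 - t4)) * E1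
        - ((t1 - t3) * (t1 - t4) * (t3 - t4)) * E2
        + ((t1 - t2) * (t1 - t4) * (t2 - t4)) * E3
        - ((t1 - t2) * (t1 - t3) * (t2 - t3)) * E4
    exact (mul_eq_zero.mp h).resolve_right (mul_ne_zero (sub_ne_zero.mpr h12)
      (mul_ne_zero (sub_ne_zero.mpr h13) (mul_ne_zero (sub_ne_zero.mpr h14)
      (mul_ne_zero (sub_ne_zero.mpr h23) (mul_ne_zero (sub_ne_zero.mpr h24)
      (sub_ne_zero.mpr h34))))))
  have E1' : e * t1 ^ 2 + f * t1 + c = 0 := by linear_combination E1 - t1 ^ 3 * hD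
  have E2' : e * t2 ^ 2 + f * t2 + c = 0 := by linear_combination E2 - t2 ^ 3 * hD
  have E3' : e * t3 ^ 2 + f * t3 + c = 0 := by linear_combination E3 - t3 ^ 3 * hD
  obtain ⟨hE, hF, hC⟩ := RGP.quad_zero h12 h13 h23 E1' E2' E3'
  exact ⟨hD, hE, hF, hC⟩

set_option maxHeartbeats 2000000 in
lemma RGP.helperGP (t1 t2 t3 t4 : k)
    (h12 : t1 ≠ t2) (h13 : t1 ≠ t3) (h14 : t1 ≠ t4)
    (h23 : t2 ≠ t3) (h24 : t2 ≠ t4) (h34 : t3 ≠ t4)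
    (q12 : t1 ^ 2 ≠ t2 ^ 2) (q13 : t1 ^ 2 ≠ t3 ^ 2) (q14 : t1 ^ 2 ≠ t4 ^ 2)
    (q23 : t2 ^ 2 ≠ t3 ^ 2) (q24 : t2 ^ 2 ≠ t4 ^ 2) (q34 : t3 ^ 2 ≠ t4 ^ 2) :
    InGeneralPosition6
      ![![t1 ^ 2, t1, 1], ![t2 ^ 2, t2, 1], ![t3 ^ 2, t3, 1], ![t4 ^ 2, t4, 1],
        ![1, 0, 0], ![0, 1, 0]] := by
  have h21 := h12.symm; have h31 := h13.symm; have h41 := h14.symm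
  have h32 := h23.symm; have h42 := h24.symm; have h43 := h34.symm
  have q21 := q12.symm; have q31 := q13.symm; have q41 := q14.symm
  have q32 := q23.symm; have q42 := q24.symm; have q43 := q34.symm
  refine ⟨?_, ?_, ?_⟩
  · intro i j hij h
    obtain ⟨cc, hc0, hc⟩ := h
    have e0 := congrFun hc 0
    have e1 := congrFun hc 1
    have e2 := congrFun hc 2
    clear hc
    simp only [Pi.smul_apply, smul_eq_mul] at e2
    fin_cases i <;> fin_cases j <;> simp_all [RGP.cons_val_five, eq_comm (a := (1 : k))] <;>
      (replace e2 : cc = 1 := e2.symm; subst e2; simp_all)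
  · intro i j l hij hil hjl h
    obtain ⟨α, β, γ, hne, hv⟩ := h
    have H1 := hv i (by simp)
    have H2 := hv j (by simp)
    have H3 := hv l (by simp)
    clear hv
    fin_cases i <;> fin_cases j <;> fin_cases l <;>
      first
      | exact hij rfl
      | exact hil rfl
      | exact hjl rfl
      | (simp [RGP.cons_val_five, RGP.vecHead_const, RGP.vecTail_const'] at H1 H2 H3
         refine hne ?_
         have hz : α = 0 ∧ β = 0 ∧ γ = 0 := by
           first
           | exact RGP.quad_zero (by assumption) (by assumption) (by assumption) H1 H2 H3
           | exact RGP.line2a (by assumption) H1 H2 H3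
           | exact RGP.line2a (by assumption) H2 H1 H3
           | exact RGP.line2a (by assumption) H3 H1 H2
           | exact RGP.line2b (by assumption) H1 H2 H3
           | exact RGP.line2b (by assumption) H2 H1 H3
           | exact RGP.line2b (by assumption) H3 H1 H2
           | exact RGP.line1 H1 H2 H3
           | exact RGP.line1 H1 H3 H2
           | exact RGP.line1 H2 H1 H3
           | exact RGP.line1 H2 H3 H1
           | exact RGP.line1 H3 H1 H2
           | exact RGP.line1 H3 H2 H1
         rw [hz.1, hz.2.1, hz.2.2])
  · rintro ⟨a, b, c, dd, ee, ff, hne, hv⟩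
    have H0 := hv 0
    have H1 := hv 1
    have H2 := hv 2
    have H3 := hv 3
    have H4 := hv 4
    have H5 := hv 5
    clear hv
    simp [RGP.cons_val_five, RGP.vecHead_const, RGP.vecTail_const'] at H0 H1 H2 H3 H4 H5
    have E1 : dd * t1 ^ 3 + ee * t1 ^ 2 + ff * t1 + c = 0 := by
      linear_combination H0 - t1 ^ 4 * H4 - t1 ^ 2 * H5
    have E2 : dd * t2 ^ 3 + ee * t2 ^ 2 + ff * t2 + c = 0 := by
      linear_combination H1 - t2 ^ 4 * H4 - t2 ^ 2 * H5
    have E3 : dd * t3 ^ 3 + ee * t3 ^ 2 + ff * t3 + c = 0 := by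
      linear_combination H2 - t3 ^ 4 * H4 - t3 ^ 2 * H5
    have E4 : dd * t4 ^ 3 + ee * t4 ^ 2 + ff * t4 + c = 0 := by
      linear_combination H3 - t4 ^ 4 * H4 - t4 ^ 2 * H5
    obtain ⟨hD, hE, hF, hC⟩ := RGP.cubic_zero h12 h13 h14 h23 h24 h34 E1 E2 E3 E4
    exact hne (by rw [H4, H5, hD, hE, hF, hC])

end Helpers

set_option maxHeartbeats 1000000 in
set_option synthInstance.maxHeartbeats 1000000 in
/-- Let `r ≥ 1`, let `K = ℚ(ζ)` be the `5^(r+1)`-th cyclotomic field with `ζ` a primitive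
`5^(r+1)`-th root of unity, and let `𝓞 K` be its ring of integers.  Let `d` be an integer with
`d ≡ 2 (mod 5)` and `d² ≡ −1 (mod 5^(r+1))`.  Let `𝔔` be a maximal ideal of `𝓞 K` with
`5 ∉ 𝔔`, let `F = 𝓞 K ⧸ 𝔔` be its residue field, and let `φ` be the quotient map.  Then the
six points of `ℙ²(F)` with coordinate triples `(φ(ζ)²,φ(ζ),1), (φ(ζ)^(2d),φ(ζ)^d,1),
(φ(ζ)^(−2),φ(ζ)^(−1),1), (φ(ζ)^(−2d),φ(ζ)^(−d),1), (1,0,0), (0,1,0)` are in general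
position. -/
theorem reduction_generalPosition (r : ℕ) (hr : 1 ≤ r) (K : Type*) [Field K] [NumberField K]
    [IsCyclotomicExtension {5 ^ (r + 1)} ℚ K] (ζ : 𝓞 K)
    (hζ : IsPrimitiveRoot ζ (5 ^ (r + 1))) (d : ℤ) (hd1 : d ≡ 2 [ZMOD 5])
    (hd2 : d ^ 2 ≡ -1 [ZMOD (5 ^ (r + 1))]) (Q : Ideal (𝓞 K)) (hQ : Q.IsMaximal)
    (h5 : (5 : 𝓞 K) ∉ Q) :
    letI : Field (𝓞 K ⧸ Q) := Ideal.Quotient.field Q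
    InGeneralPosition6
      ![![Ideal.Quotient.mk Q ζ ^ 2, Ideal.Quotient.mk Q ζ, 1],
        ![Ideal.Quotient.mk Q ζ ^ (2 * d), Ideal.Quotient.mk Q ζ ^ d, 1],
        ![Ideal.Quotient.mk Q ζ ^ (-2 : ℤ), Ideal.Quotient.mk Q ζ ^ (-1 : ℤ), 1],
        ![Ideal.Quotient.mk Q ζ ^ (-(2 * d)), Ideal.Quotient.mk Q ζ ^ (-d), 1],
        ![1, 0, 0], ![0, 1, 0]] := by
  haveI := hQ
  letI : Field (𝓞 K ⧸ Q) := Ideal.Quotient.field Q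
  set z : 𝓞 K ⧸ Q := Ideal.Quotient.mk Q ζ with hz
  -- `ζ - 1 ∉ Q`, since `ζ - 1` divides `5` in `𝓞 K`
  have hζ1Q : ζ - 1 ∉ Q := by
    intro hmem
    have hroot : (Polynomial.cyclotomic (5 ^ (r + 1)) (𝓞 K)).IsRoot ζ :=
      hζ.isRoot_cyclotomic (by positivity)
    have hdvd : (ζ - 1) ∣ (Polynomial.cyclotomic (5 ^ (r + 1)) (𝓞 K)).eval ζ -
        (Polynomial.cyclotomic (5 ^ (r + 1)) (𝓞 K)).eval 1 :=
      Polynomial.sub_dvd_eval_sub ζ 1 _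
    have heval1 : (Polynomial.cyclotomic (5 ^ (r + 1)) (𝓞 K)).eval 1 = 5 := by
      haveI : Fact (Nat.Prime 5) := ⟨by norm_num⟩
      simpa using Polynomial.eval_one_cyclotomic_prime_pow (R := 𝓞 K) (p := 5) (k := r)
    rw [Polynomial.IsRoot.def.mp hroot, heval1, zero_sub] at hdvd
    obtain ⟨w, hw⟩ := (dvd_neg).mp hdvd
    exact h5 (hw ▸ Ideal.mul_mem_right _ _ hmem)
  have hnn : z ^ ((5 : ℕ) ^ (r + 1)) = 1 := by
    rw [hz, ← map_pow, hζ.pow_eq_one, map_one]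
  have hz0 : z ≠ 0 := by
    intro h
    rw [h, zero_pow (by positivity)] at hnn
    exact zero_ne_one hnn
  have hnz : z ^ ((5 : ℤ) ^ (r + 1)) = 1 := by
    rw [show ((5 : ℤ) ^ (r + 1)) = (((5 ^ (r + 1) : ℕ) : ℤ)) by push_cast; ring,
      zpow_natCast, hnn]
  have hone : ∀ e : ℤ, ¬ (5 : ℤ) ∣ e → z ^ e ≠ 1 := by
    intro e he h1
    have h5p : Prime (5 : ℤ) := by norm_num
    have hcop : IsCoprime e ((5 : ℤ) ^ (r + 1)) :=
      (((h5p.coprime_iff_not_dvd).mpr he).pow_left).symm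
    obtain ⟨u, v, huv⟩ := hcop
    have hzone : z = 1 := by
      calc z = z ^ (u * e + v * (5 : ℤ) ^ (r + 1)) := by rw [huv, zpow_one]
      _ = (z ^ e) ^ u * (z ^ ((5 : ℤ) ^ (r + 1))) ^ v := by
          rw [zpow_add₀ hz0, mul_comm u e, mul_comm v ((5 : ℤ) ^ (r + 1)), zpow_mul, zpow_mul]
      _ = 1 := by rw [h1, hnz, one_zpow, one_zpow, one_mul]
    apply hζ1Q
    rw [← Ideal.Quotient.eq_zero_iff_mem, map_sub, map_one, ← hz, hzone, sub_self]
  have hzne : ∀ a b : ℤ, ¬ (5 : ℤ) ∣ (a - b) → z ^ a ≠ z ^ b := by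
    intro a b hab h
    apply hone (a - b) hab
    rw [zpow_sub₀ hz0, h, div_self (zpow_ne_zero _ hz0)]
  have hsq : ∀ a : ℤ, (z ^ a) ^ 2 = z ^ (2 * a) := fun a => by
    rw [sq, ← zpow_add₀ hz0, two_mul]
  have hdd : (5 : ℤ) ∣ d - 2 := Int.ModEq.dvd hd1.symm
  have key := RGP.helperGP (z ^ (1 : ℤ)) (z ^ d) (z ^ (-1 : ℤ)) (z ^ (-d))
    (hzne 1 d (by omega)) (hzne 1 (-1) (by omega)) (hzne 1 (-d) (by omega))
    (hzne d (-1) (by omega)) (hzne d (-d) (by omega)) (hzne (-1) (-d) (by omega))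
    (by rw [hsq, hsq]; exact hzne (2 * 1) (2 * d) (by omega))
    (by rw [hsq, hsq]; exact hzne (2 * 1) (2 * (-1)) (by omega))
    (by rw [hsq, hsq]; exact hzne (2 * 1) (2 * (-d)) (by omega))
    (by rw [hsq, hsq]; exact hzne (2 * d) (2 * (-1)) (by omega))
    (by rw [hsq, hsq]; exact hzne (2 * d) (2 * (-d)) (by omega))
    (by rw [hsq, hsq]; exact hzne (2 * (-1)) (2 * (-d)) (by omega))
  have e21 : z ^ (2 * d) = (z ^ d) ^ 2 := (hsq d).symm
  have e22 : z ^ (-2 : ℤ) = (z ^ (-1 : ℤ)) ^ 2 := by rw [hsq]; norm_num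
  have e23 : z ^ (-(2 * d)) = (z ^ (-d)) ^ 2 := by
    rw [hsq, show (2 : ℤ) * (-d) = -(2 * d) by ring]
  have hm : (![![z ^ 2, z, 1], ![z ^ (2 * d), z ^ d, 1],
      ![z ^ (-2 : ℤ), z ^ (-1 : ℤ), 1], ![z ^ (-(2 * d)), z ^ (-d), 1],
      ![1, 0, 0], ![0, 1, 0]] : Fin 6 → Fin 3 → (𝓞 K ⧸ Q))
      = ![![(z ^ (1 : ℤ)) ^ 2, z ^ (1 : ℤ), 1], ![(z ^ d) ^ 2, z ^ d, 1],
        ![(z ^ (-1 : ℤ)) ^ 2, z ^ (-1 : ℤ), 1], ![(z ^ (-d)) ^ 2, z ^ (-d), 1],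
        ![1, 0, 0], ![0, 1, 0]] := by
    funext i
    fin_cases i <;> funext j <;> fin_cases j <;> simp [zpow_one, e21, e22, e23]
  exact hm ▸ key
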